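/- For n ≥ 1, the number of plane trees with n edges and k young leaves is C(n-1,k)·M_{n-k-1}, where M_m denotes the m-th Motzkin number. -/

import Mathlib

/-- A plane tree: a root together with an ordered (possibly empty) list of subtrees. -/
inductive PlaneTree where
  | node : List PlaneTree → PlaneTree

namespace PlaneTree

/-- The number of edges of a plane tree. -/
def edges : PlaneTree → ℕ
  | node ts => (ts.attach.map (fun t => edges t.1 + 1)).sum
decreasing_by have := List.sizeOf_lt_of_mem t.2; simp at *; omega

/-- Indicator that a tree is a single vertex (i.e. the corresponding child is a leaf). -/
def isLeafInd : PlaneTree → ℕ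
  | node [] => 1
  | node (_ :: _) => 0

/-- The number of old leaves: leaves that are the leftmost child of their parent. -/
def oldLeaves : PlaneTree → ℕ
  | node [] => 0
  | node (t :: ts) =>
      isLeafInd t + oldLeaves t + (ts.attach.map (fun s => oldLeaves s.1)).sum
decreasing_by
  · simp; omega
  · have := List.sizeOf_lt_of_mem s.2; simp at *; omega

/-- The number of young leaves: leaves that are not the leftmost child of their parent. -/
def youngLeaves : PlaneTree → ℕ
  | node [] => 0
  | node (t :: ts) =>
      youngLeaves t + (ts.attach.map (fun s => isLeafInd s.1 + youngLeaves s.1)).sum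
decreasing_by
  · simp; omega
  · have := List.sizeOf_lt_of_mem s.2; simp at *; omega

end PlaneTree

/-- The `m`-th Motzkin number, `M_m = Σ_k C(m,2k)·Catalan(k)`. -/
def motzkin (m : ℕ) : ℕ := ∑ k ∈ Finset.range (m + 1), m.choose (2 * k) * catalan k

open Finset


theorem sum_sq_diag (R : ℕ) (G : ℕ → ℕ → ℕ) (h0 : ∀ u v, R ≤ u ∨ R ≤ v → G u v = 0) :
    (∑ u ∈ range R, ∑ v ∈ range R, G u v) =
      ∑ w ∈ range (2 * R), ∑ u ∈ range (w + 1), G u (w - u) := by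
  rw [← Finset.sum_product', Finset.sum_sigma']
  rw [← Finset.sum_filter_ne_zero (s := range R ×ˢ range R)]
  rw [← Finset.sum_filter_ne_zero (s := (range (2*R)).sigma fun w => range (w+1))]
  refine Finset.sum_bij' (i := fun p _ => (⟨p.1 + p.2, p.1⟩ : Σ _ : ℕ, ℕ))
    (j := fun q _ => ((q.2, q.1 - q.2) : ℕ × ℕ)) ?_ ?_ ?_ ?_ ?_
  · rintro ⟨u, v⟩ h
    simp only [mem_filter, mem_sigma, mem_product, mem_range] at h ⊢
    exact ⟨⟨by omega, by omega⟩, by simpa using h.2⟩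
  · rintro ⟨w, u⟩ h
    simp only [mem_filter, mem_sigma, mem_product, mem_range] at h ⊢
    have h2 := h.2
    have hu : u < R := by by_contra hc; exact h2 (h0 _ _ (Or.inl (by omega)))
    have hv : w - u < R := by by_contra hc; exact h2 (h0 _ _ (Or.inr (by omega)))
    exact ⟨⟨hu, hv⟩, h2⟩
  · rintro ⟨u, v⟩ h; simp
  · rintro ⟨w, u⟩ h
    simp only [mem_filter, mem_sigma, mem_range] at h
    have : u ≤ w := by omega
    simp [Nat.add_sub_cancel' this]
  · rintro ⟨u, v⟩ h; simp


theorem hockey (x k : ℕ) : ∑ s ∈ range (k+1), (x+s).choose s = (x+k+1).choose k := by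
  induction k with
  | zero => simp
  | succ k ih =>
    rw [Finset.sum_range_succ, ih,
      show x + (k+1) + 1 = (x+k+1)+1 by omega, Nat.choose_succ_succ (x+k+1) k]
    rfl

theorem vand (k : ℕ) : ∀ y x : ℕ, ∑ s ∈ range (k+1), (x+s).choose s * ((y + (k-s)).choose (k-s))
    = (x+y+k+1).choose k := by
  induction k with
  | zero => intro y x; simp
  | succ k ihk =>
    intro y
    induction y with
    | zero =>
      intro x
      simpa using hockey x (k+1)
    | succ y ihy =>
      intro x
      rw [Finset.sum_range_succ]
      simp only [Nat.sub_self, Nat.add_zero, Nat.choose_zero_right, Nat.mul_one]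
      have pas : ∀ s ∈ range (k+1), (x+s).choose s * ((y + 1 + (k + 1 - s)).choose (k+1-s))
          = (x+s).choose s * ((y + 1 + (k - s)).choose (k-s))
            + (x+s).choose s * ((y + (k + 1 - s)).choose (k+1-s)) := by
        intro s hs
        simp only [mem_range] at hs
        have h1 : k + 1 - s = (k - s) + 1 := by omega
        have h2 : y + 1 + (k + 1 - s) = (y + 1 + (k - s)) + 1 := by omega
        have h3 : y + (k+1-s) = y + 1 + (k - s) := by omega
        rw [h3, h2, h1, Nat.choose_succ_succ (y + 1 + (k-s)) (k-s), Nat.mul_add]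
      rw [Finset.sum_congr rfl pas, Finset.sum_add_distrib]
      have e1 : ∑ s ∈ range (k+1), (x+s).choose s * ((y + 1 + (k - s)).choose (k-s))
          = (x+(y+1)+k+1).choose k := ihk (y+1) x
      have e2 : (∑ s ∈ range (k+1), (x+s).choose s * ((y + (k + 1 - s)).choose (k+1-s)))
            + (x+(k+1)).choose (k+1)
          = (x+y+(k+1)+1).choose (k+1) := by
        have h := ihy x
        rw [Finset.sum_range_succ] at h
        simpa using h
      rw [e1, add_assoc, e2,
        show x+(y+1)+(k+1)+1 = (x+(y+1)+k+1)+1 by omega,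
        Nat.choose_succ_succ (x+(y+1)+k+1) k,
        show x+y+(k+1)+1 = x+(y+1)+k+1 by omega]

-- W: ∑_{a≤m} C(a,p) C(m-a,q) = C(m+1, p+q+1)
theorem wand (m p q : ℕ) : ∑ a ∈ range (m+1), (a.choose p) * ((m-a).choose q)
    = (m+1).choose (p+q+1) := by
  by_cases hpq : p + q ≤ m
  · -- reindex a = p + s
    have hz : ∀ a ∈ range (m+1), a ∉ Ico p (m-q+1) → a.choose p * ((m-a).choose q) = 0 := by
      intro a ha hn
      simp only [mem_Ico, not_and, not_lt, mem_range] at hn ha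
      by_cases h1 : p ≤ a
      · have : m - q + 1 ≤ a := hn h1
        have : m - a < q := by omega
        rw [Nat.choose_eq_zero_of_lt this, Nat.mul_zero]
      · rw [Nat.choose_eq_zero_of_lt (by omega), Nat.zero_mul]
    rw [← Finset.sum_subset (s₁ := Ico p (m-q+1)) (by intro a ha; simp only [mem_Ico, mem_range] at *; omega) hz]
    rw [Finset.sum_Ico_eq_sum_range]
    have hlen : m - q + 1 - p = (m - p - q) + 1 := by omega
    rw [hlen]
    have := vand (m - p - q) q p
    have e : ∀ s ∈ range ((m-p-q)+1), ((p + s).choose p) * ((m-(p+s)).choose q)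
        = (p+s).choose s * ((q + ((m-p-q) - s)).choose ((m-p-q)-s)) := by
      intro s hs
      simp only [mem_range] at hs
      have c1 : (p + s).choose p = (p+s).choose s := by
        rw [← Nat.choose_symm (by omega : s ≤ p+s), Nat.add_sub_cancel]
      have c2 : m - (p + s) = q + ((m-p-q) - s) := by omega
      have c3 : (q + ((m-p-q) - s)).choose q = (q + ((m-p-q) - s)).choose ((m-p-q)-s) := by
        rw [← Nat.choose_symm (by omega : (m-p-q)-s ≤ q + ((m-p-q)-s)), Nat.add_sub_cancel]
      rw [c1, c2, c3]
    rw [Finset.sum_congr rfl e, vand (m-p-q) q p,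
      show p+q+(m-p-q)+1 = m+1 by omega,
      ← Nat.choose_symm (by omega : p+q+1 ≤ m+1),
      show m+1-(p+q+1) = m-p-q by omega]
  · rw [Nat.choose_eq_zero_of_lt (by omega)]
    apply Finset.sum_eq_zero
    intro a ha
    simp only [mem_range] at ha
    by_cases h1 : p ≤ a
    · have : m - a < q := by omega
      rw [Nat.choose_eq_zero_of_lt this, Nat.mul_zero]
    · rw [Nat.choose_eq_zero_of_lt (by omega), Nat.zero_mul]


theorem motzkin_zero : motzkin 0 = 1 := by simp [motzkin]
theorem motzkin_one : motzkin 1 = 1 := by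
  simp [motzkin, Finset.sum_range_succ]

theorem catalan_succ_range (n : ℕ) :
    catalan (n+1) = ∑ u ∈ range (n+1), catalan u * catalan (n - u) := by
  rw [catalan_succ]
  exact Fin.sum_univ_eq_sum_range (fun i => catalan i * catalan (n - i)) (n+1)

theorem wand' (m u v : ℕ) : ∑ a ∈ range (m+1), (a.choose (2*u) * catalan u) * ((m-a).choose (2*v) * catalan v)
    = catalan u * catalan v * (m+1).choose (2*(u+v)+1) := by
  have : ∀ a ∈ range (m+1), (a.choose (2*u) * catalan u) * ((m-a).choose (2*v) * catalan v)
      = catalan u * catalan v * (a.choose (2*u) * ((m-a).choose (2*v))) := by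
    intro a _; ring
  rw [Finset.sum_congr rfl this, ← Finset.mul_sum, wand m (2*u) (2*v),
    show 2*u+(2*v)+1 = 2*(u+v)+1 by ring]

theorem motzkin_rec (m : ℕ) :
    motzkin (m+2) = motzkin (m+1) + ∑ a ∈ range (m+1), motzkin a * motzkin (m-a) := by
  have L1 : motzkin (m+2) = (∑ k ∈ range (m+2), (m+2).choose (2*(k+1)) * catalan (k+1)) + 1 := by
    rw [motzkin, Finset.sum_range_succ']
    simp
  have pas : ∀ k ∈ range (m+2), (m+2).choose (2*(k+1)) * catalan (k+1)
      = (m+1).choose (2*(k+1)) * catalan (k+1) + (m+1).choose (2*k+1) * catalan (k+1) := by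
    intro k _
    rw [show 2*(k+1) = (2*k+1)+1 by ring, Nat.choose_succ_succ (m+1) (2*k+1)]
    ring
  have L2 : motzkin (m+2) = ((∑ k ∈ range (m+2), (m+1).choose (2*(k+1)) * catalan (k+1)) + 1)
      + ∑ k ∈ range (m+2), (m+1).choose (2*k+1) * catalan (k+1) := by
    rw [L1, Finset.sum_congr rfl pas, Finset.sum_add_distrib]; ring
  have A : ∑ k ∈ range (m+2), (m+1).choose (2*(k+1)) * catalan (k+1)
      = ∑ k ∈ range (m+1), (m+1).choose (2*(k+1)) * catalan (k+1) := by
    rw [Finset.sum_range_succ, Nat.choose_eq_zero_of_lt (by omega), Nat.zero_mul, Nat.add_zero]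
  have B : motzkin (m+1) = (∑ k ∈ range (m+1), (m+1).choose (2*(k+1)) * catalan (k+1)) + 1 := by
    rw [motzkin, Finset.sum_range_succ']
    simp
  rw [L2, A, ← B]
  congr 1
  -- now: ∑ k ∈ range (m+2), C(m+1,2k+1) * c_{k+1} = ∑ a, motzkin a * motzkin (m-a)
  have conv : ∀ a ∈ range (m+1), motzkin a * motzkin (m-a)
      = ∑ u ∈ range (m+1), ∑ v ∈ range (m+1),
          (a.choose (2*u) * catalan u) * ((m-a).choose (2*v) * catalan v) := by
    intro a ha
    simp only [mem_range] at ha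
    rw [motzkin, motzkin, Finset.sum_mul_sum]
    rw [Finset.sum_subset (Finset.range_subset_range.2 (by omega : a+1 ≤ m+1))
        (by intro u _ hu; simp only [mem_range] at hu
            exact Finset.sum_eq_zero fun v _ => by
              rw [Nat.choose_eq_zero_of_lt (show a < 2*u by omega), Nat.zero_mul, Nat.zero_mul])]
    apply Finset.sum_congr rfl
    intro u hu
    rw [Finset.sum_subset (Finset.range_subset_range.2 (by omega : m-a+1 ≤ m+1))
        (by intro v _ hv; simp only [mem_range] at hv
            rw [Nat.choose_eq_zero_of_lt (show m - a < 2*v by omega), Nat.zero_mul, Nat.mul_zero])]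
  rw [Finset.sum_congr rfl conv]
  rw [Finset.sum_comm]
  have swap2 : ∀ u ∈ range (m+1), ∑ a ∈ range (m+1), ∑ v ∈ range (m+1),
        (a.choose (2*u) * catalan u) * ((m-a).choose (2*v) * catalan v)
      = ∑ v ∈ range (m+1), catalan u * catalan v * (m+1).choose (2*(u+v)+1) := by
    intro u _
    rw [Finset.sum_comm]
    exact Finset.sum_congr rfl fun v _ => wand' m u v
  rw [Finset.sum_congr rfl swap2]
  have G0 : ∀ u v : ℕ, m+1 ≤ u ∨ m+1 ≤ v →
      catalan u * catalan v * (m+1).choose (2*(u+v)+1) = 0 := by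
    intro u v h
    rw [Nat.choose_eq_zero_of_lt (by omega), Nat.mul_zero]
  rw [sum_sq_diag (m+1) _ G0]
  -- now RHS is ∑ w ∈ range (2*(m+1)), ∑ u ∈ range (w+1), c_u c_{w-u} C(m+1, 2*(u+(w-u))+1)
  have inner : ∀ w ∈ range (2*(m+1)), (∑ u ∈ range (w+1),
        catalan u * catalan (w-u) * (m+1).choose (2*(u+(w-u))+1))
      = (m+1).choose (2*w+1) * catalan (w+1) := by
    intro w _
    have : ∀ u ∈ range (w+1), catalan u * catalan (w-u) * (m+1).choose (2*(u+(w-u))+1)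
        = (m+1).choose (2*w+1) * (catalan u * catalan (w-u)) := by
      intro u hu
      simp only [mem_range] at hu
      rw [show u + (w-u) = w by omega]
      ring
    rw [Finset.sum_congr rfl this, ← Finset.mul_sum, ← catalan_succ_range]
  rw [Finset.sum_congr rfl inner]
  exact Finset.sum_subset (Finset.range_subset_range.2 (by omega : m+2 ≤ 2*(m+1)))
      (by intro w _ hw; simp only [mem_range] at hw
          rw [Nat.choose_eq_zero_of_lt (show m+1 < 2*w+1 by omega), Nat.zero_mul])
/-- bicolored-Motzkin count -/
def bm (m k : ℕ) : ℕ := m.choose k * motzkin (m - k)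

theorem bm_eq_zero {m k : ℕ} (h : m < k) : bm m k = 0 := by
  rw [bm, Nat.choose_eq_zero_of_lt h, Nat.zero_mul]

theorem bm_self (m : ℕ) : bm m m = 1 := by
  rw [bm, Nat.choose_self, Nat.sub_self, motzkin_zero, Nat.mul_one]

theorem bm_zero (m : ℕ) : bm m 0 = motzkin m := by
  rw [bm, Nat.choose_zero_right, Nat.one_mul, Nat.sub_zero]

theorem key (m k : ℕ) :
    ∑ a ∈ range (m+k+1), ∑ j ∈ range (k+1), bm a j * bm (m+k-a) (k-j)
      = (m+k+1).choose k * ∑ i ∈ range (m+1), motzkin i * motzkin (m-i) := by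
  rw [Finset.sum_comm]
  have inner : ∀ j ∈ range (k+1), ∑ a ∈ range (m+k+1), bm a j * bm (m+k-a) (k-j)
      = ∑ i ∈ range (m+1), ((i+j).choose j * ((m-i)+(k-j)).choose (k-j))
          * (motzkin i * motzkin (m-i)) := by
    intro j hj
    simp only [mem_range] at hj
    rw [← Finset.sum_subset (show Ico j (j+m+1) ⊆ range (m+k+1) by
        intro a ha; simp only [mem_Ico, mem_range] at *; omega)
      (by intro a ha hna; simp only [mem_Ico, mem_range, not_and, not_lt] at ha hna
          rcases Nat.lt_or_ge a j with h | h
          · rw [bm_eq_zero h, Nat.zero_mul]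
          · rw [bm_eq_zero (show m+k-a < k-j by have := hna h; omega), Nat.mul_zero])]
    rw [Finset.sum_Ico_eq_sum_range, show j+m+1-j = m+1 by omega]
    apply Finset.sum_congr rfl
    intro i hi
    simp only [mem_range] at hi
    have e1 : bm (j+i) j = (i+j).choose j * motzkin i := by
      rw [bm, show j+i-j = i by omega, show j+i = i+j by omega]
    have e2 : bm (m+k-(j+i)) (k-j) = ((m-i)+(k-j)).choose (k-j) * motzkin (m-i) := by
      rw [bm, show m+k-(j+i) = ((m-i)+(k-j)) by omega, show (m-i)+(k-j)-(k-j) = m-i by omega]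
    rw [e1, e2]; ring
  rw [Finset.sum_congr rfl inner, Finset.sum_comm, Finset.mul_sum]
  apply Finset.sum_congr rfl
  intro i hi
  simp only [mem_range] at hi
  rw [← Finset.sum_mul]
  have := vand k (m-i) i
  rw [show i+(m-i)+k+1 = m+k+1 by omega] at this
  rw [show (∑ j ∈ range (k+1), (i+j).choose j * ((m-i)+(k-j)).choose (k-j))
      = (∑ s ∈ range (k+1), (i+s).choose s * ((m-i)+(k-s)).choose (k-s)) from rfl]
  rw [this]

theorem gId (p k : ℕ) :
    bm (p+1) k = bm p k + (if k = 0 then 0 else bm p (k-1))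
      + ∑ a ∈ range p, ∑ j ∈ range (k+1), bm a j * bm (p-1-a) (k-j) := by
  rcases Nat.lt_or_ge (p+1) k with hk | hk
  · -- k > p+1 : everything vanishes
    have hz : ∑ a ∈ range p, ∑ j ∈ range (k+1), bm a j * bm (p-1-a) (k-j) = 0 := by
      apply Finset.sum_eq_zero; intro a ha; simp only [mem_range] at ha
      apply Finset.sum_eq_zero; intro j hj; simp only [mem_range] at hj
      rcases Nat.lt_or_ge a j with h | h
      · rw [bm_eq_zero h, Nat.zero_mul]
      · rw [bm_eq_zero (show p-1-a < k-j by omega), Nat.mul_zero]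
    rw [bm_eq_zero hk, bm_eq_zero (by omega : p < k),
      if_neg (by omega), bm_eq_zero (by omega : p < k-1), hz]
  rcases Nat.eq_or_lt_of_le hk with hk1 | hk1
  · -- k = p+1
    subst hk1
    have hz : ∑ a ∈ range p, ∑ j ∈ range (p+1+1), bm a j * bm (p-1-a) (p+1-j) = 0 := by
      apply Finset.sum_eq_zero; intro a ha; simp only [mem_range] at ha
      apply Finset.sum_eq_zero; intro j hj; simp only [mem_range] at hj
      rcases Nat.lt_or_ge a j with h | h
      · rw [bm_eq_zero h, Nat.zero_mul]
      · rw [bm_eq_zero (show p-1-a < p+1-j by omega), Nat.mul_zero]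
    rw [bm_self, bm_eq_zero (by omega), if_neg (by omega), Nat.add_one_sub_one, bm_self, hz]
  -- now k ≤ p
  have hkp : k < p + 1 := hk1
  rcases Nat.eq_or_lt_of_le (Nat.le_of_lt_succ hkp) with hk2 | hk2
  · -- k = p
    subst hk2
    have hz : ∑ a ∈ range k, ∑ j ∈ range (k+1), bm a j * bm (k-1-a) (k-j) = 0 := by
      apply Finset.sum_eq_zero; intro a ha; simp only [mem_range] at ha
      apply Finset.sum_eq_zero; intro j hj; simp only [mem_range] at hj
      rcases Nat.lt_or_ge a j with h | h
      · rw [bm_eq_zero h, Nat.zero_mul]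
      · rw [bm_eq_zero (show k-1-a < k-j by omega), Nat.mul_zero]
    rw [hz, bm_self]
    rcases Nat.eq_zero_or_pos k with h0 | h0
    · subst h0
      rw [if_pos rfl, bm, Nat.choose_zero_right, motzkin_one]
    · rw [if_neg (by omega), bm, bm,
        show k+1-k = 1 by omega, show k - (k-1) = 1 by omega, motzkin_one,
        Nat.choose_succ_self_right, Nat.choose_symm (by omega : 1 ≤ k), Nat.choose_one_right]
      omega
  · -- k < p
    rcases Nat.eq_zero_or_pos k with h0 | h0
    · subst h0
      rw [if_pos rfl, bm_zero, bm_zero]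
      have hz : ∀ a ∈ range p, ∑ j ∈ range 1, bm a j * bm (p-1-a) (0-j)
          = motzkin a * motzkin (p-1-a) := by
        intro a _
        rw [Finset.sum_range_one, bm_zero, Nat.sub_zero, bm_zero]
      rw [Finset.sum_congr rfl hz]
      have := motzkin_rec (p-1)
      rw [show p-1+2 = p+1 by omega, show p-1+1 = p by omega] at this
      rw [this]
      rfl
    · -- 1 ≤ k < p : main case
      obtain ⟨k', rfl⟩ : ∃ k', k = k'+1 := ⟨k-1, by omega⟩
      set m := p - 1 - (k'+1) with hm
      have hp : p = m + k' + 2 := by omega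
      rw [if_neg (Nat.succ_ne_zero k'), Nat.add_sub_cancel]
      have e0 : bm (p+1) (k'+1) = (p.choose k' + p.choose (k'+1)) * motzkin (m+2) := by
        rw [bm, show p+1-(k'+1) = m+2 by omega, Nat.choose_succ_succ p k']
      have e1 : bm p (k'+1) = p.choose (k'+1) * motzkin (m+1) := by
        rw [bm, show p-(k'+1) = m+1 by omega]
      have e2 : bm p k' = p.choose k' * motzkin (m+2) := by
        rw [bm, show p-k' = m+2 by omega]
      have hkey := key m (k'+1)
      rw [show m+(k'+1)+1 = p by omega, show m+(k'+1) = p-1 by omega] at hkey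
      rw [e0, e1, e2, hkey, motzkin_rec m]
      ring

namespace PlaneTree

noncomputable instance : DecidableEq PlaneTree := Classical.decEq _

open Finset

theorem edges_node (ts : List PlaneTree) : edges (node ts) = (ts.map (fun t => edges t + 1)).sum := by
  rw [edges]; exact congrArg List.sum (List.attach_map_val (l := ts) (f := fun t => t.edges + 1))

theorem young_nil : youngLeaves (node []) = 0 := by rw [youngLeaves]

theorem young_cons (t : PlaneTree) (ts : List PlaneTree) :
    youngLeaves (node (t :: ts)) = youngLeaves t + (ts.map (fun s => isLeafInd s + youngLeaves s)).sum := by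
  rw [youngLeaves]
  exact congrArg _ (congrArg List.sum (List.attach_map_val (l := ts) (f := fun s => isLeafInd s + youngLeaves s)))

theorem edges_eq_zero {T : PlaneTree} (h : T.edges = 0) : T = node [] := by
  obtain ⟨ts⟩ := T
  cases ts with
  | nil => rfl
  | cons t ts => rw [edges_node] at h; simp at h

theorem edges_node_ne {t : PlaneTree} {ts : List PlaneTree} : edges (node (t :: ts)) ≠ 0 := by
  rw [edges_node]; simp

-- the auxiliary bound
theorem young_aux : ∀ n : ℕ, ∀ t : PlaneTree, t.edges = n →
    t.youngLeaves + t.isLeafInd ≤ max 1 t.edges := by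
  intro n
  induction n using Nat.strong_induction_on with
  | _ n ih =>
    rintro ⟨ts⟩ rfl
    cases ts with
    | nil => simp [young_nil, isLeafInd, edges_node]
    | cons t ts =>
      rw [young_cons, show isLeafInd (node (t::ts)) = 0 from rfl, Nat.add_zero]
      have hE : edges (node (t::ts)) = (edges t + 1) + (ts.map (fun s => edges s + 1)).sum := by
        rw [edges_node, List.map_cons, List.sum_cons]
      have hts : ∀ s ∈ ts, edges s < edges (node (t::ts)) := by
        intro s hs
        have : edges s + 1 ≤ (ts.map (fun s => edges s + 1)).sum :=
          List.single_le_sum (by simp) _ (List.mem_map_of_mem hs)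
        omega
      have ht : edges t < edges (node (t::ts)) := by omega
      -- bound for t
      have bt : youngLeaves t ≤ edges t := by
        have := ih _ ht t rfl
        rcases Nat.eq_zero_or_pos (edges t) with h0 | h0
        · rw [edges_eq_zero h0, young_nil]; omega
        · rw [Nat.max_eq_right h0] at this; omega
      -- bound for list
      have bl : (ts.map (fun s => isLeafInd s + youngLeaves s)).sum
          ≤ (ts.map (fun s => edges s + 1)).sum := by
        apply List.sum_le_sum
        intro s hs
        have := ih _ (hts s hs) s rfl
        rcases Nat.eq_zero_or_pos (edges s) with h0 | h0
        · rw [edges_eq_zero h0]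
          rw [show youngLeaves (node []) = 0 from young_nil,
            show isLeafInd (node []) = 1 from rfl]
          omega
        · rw [Nat.max_eq_right h0] at this; omega
      rw [Nat.max_eq_right (by omega : 1 ≤ edges (node (t::ts)))]
      omega

theorem young_succ_le {T : PlaneTree} (h : T.edges ≠ 0) :
    T.youngLeaves + 1 ≤ T.edges := by
  obtain ⟨ts⟩ := T
  cases ts with
  | nil => simp [edges_node] at h
  | cons t ts =>
    rw [young_cons]
    have hE : edges (node (t::ts)) = (edges t + 1) + (ts.map (fun s => edges s + 1)).sum := by
      rw [edges_node, List.map_cons, List.sum_cons]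
    have bt : youngLeaves t ≤ edges t := by
      have := young_aux _ t rfl
      rcases Nat.eq_zero_or_pos (edges t) with h0 | h0
      · rw [edges_eq_zero h0, young_nil]; omega
      · rw [Nat.max_eq_right h0] at this; omega
    have bl : (ts.map (fun s => isLeafInd s + youngLeaves s)).sum
        ≤ (ts.map (fun s => edges s + 1)).sum := by
      apply List.sum_le_sum
      intro s hs
      have := young_aux _ s rfl
      rcases Nat.eq_zero_or_pos (edges s) with h0 | h0
      · rw [edges_eq_zero h0]
        rw [show youngLeaves (node []) = 0 from young_nil,
          show isLeafInd (node []) = 1 from rfl]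
        omega
      · rw [Nat.max_eq_right h0] at this; omega
    omega

def snoc (b t : PlaneTree) : PlaneTree := match b with | node ts => node (ts ++ [t])

theorem edges_snoc (b t : PlaneTree) : (snoc b t).edges = b.edges + t.edges + 1 := by
  cases b with
  | node ts => simp [snoc, edges_node]; omega

theorem young_snoc (b t : PlaneTree) :
    (snoc b t).youngLeaves = b.youngLeaves + t.youngLeaves +
      (if b = node [] then 0 else t.isLeafInd) := by
  cases b with
  | node ts =>
    cases ts with
    | nil => simp [snoc, young_cons, young_nil]
    | cons a l => simp [snoc, young_cons]; omega

theorem snoc_injective : ∀ b t b' t' : PlaneTree, snoc b t = snoc b' t' → b = b' ∧ t = t' := by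
  rintro ⟨ts⟩ t ⟨ts'⟩ t' h
  simp only [snoc, node.injEq] at h
  have := List.append_inj' h rfl
  simp only [List.cons.injEq, and_true] at this
  exact ⟨congrArg node this.1, this.2⟩

theorem exists_snoc {T : PlaneTree} (h : T.edges ≠ 0) :
    ∃ b t, T = snoc b t := by
  obtain ⟨ts⟩ := T
  cases ts with
  | nil => simp [edges_node] at h
  | cons a l =>
    refine ⟨node ((a::l).dropLast), (a::l).getLast (by simp), ?_⟩
    simp only [snoc, node.injEq]
    exact (List.dropLast_append_getLast (by simp)).symm


noncomputable def trees : ℕ → Finset PlaneTree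
  | 0 => {node []}
  | n+1 => (Finset.range (n+1)).attach.biUnion fun i =>
      ((trees i.1) ×ˢ (trees (n - i.1))).image fun p => snoc p.1 p.2
decreasing_by
  · have := Finset.mem_range.1 i.2; omega
  · have := Finset.mem_range.1 i.2; omega

theorem mem_trees : ∀ n : ℕ, ∀ T : PlaneTree, T ∈ trees n ↔ T.edges = n := by
  intro n
  induction n using Nat.strong_induction_on with
  | _ n ih =>
    intro T
    match n with
    | 0 =>
      rw [trees]
      simp only [Finset.mem_singleton]
      constructor
      · rintro rfl; rw [edges_node]; rfl
      · intro h; exact edges_eq_zero h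
    | n+1 =>
      rw [trees]
      simp only [Finset.mem_biUnion, Finset.mem_attach, Finset.mem_image, Finset.mem_product,
        true_and, Prod.exists]
      constructor
      · rintro ⟨⟨i, hi⟩, b, t, ⟨hb, ht⟩, rfl⟩
        simp only [Finset.mem_range] at hi
        rw [ih i (by omega) b] at hb
        rw [ih (n - i) (by omega) t] at ht
        rw [edges_snoc, hb, ht]
        omega
      · intro hT
        obtain ⟨b, t, rfl⟩ := exists_snoc (show T.edges ≠ 0 by omega)
        rw [edges_snoc] at hT
        refine ⟨⟨b.edges, Finset.mem_range.2 (by omega)⟩, b, t, ⟨?_, ?_⟩, rfl⟩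
        · exact (ih b.edges (by omega) b).2 rfl
        · exact (ih (n - b.edges) (by omega) t).2 (by omega)

open Finset

noncomputable def N (n k : ℕ) : ℕ := ((trees n).filter fun T => T.youngLeaves = k).card

theorem trees_zero : trees 0 = {node []} := by rw [trees]

theorem N_zero (k : ℕ) : N 0 k = if k = 0 then 1 else 0 := by
  rw [N, trees_zero, Finset.filter_singleton]
  by_cases h : k = 0
  · subst h; rw [if_pos young_nil, if_pos rfl, Finset.card_singleton]
  · rw [if_neg (by rw [young_nil]; omega), if_neg h, Finset.card_empty]

theorem N_high {n k : ℕ} (hn : 1 ≤ n) (hk : n ≤ k) : N n k = 0 := by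
  rw [N, Finset.card_eq_zero, Finset.filter_eq_empty_iff]
  intro T hT
  rw [mem_trees] at hT
  have := young_succ_le (show T.edges ≠ 0 by omega)
  omega

theorem N_master (n k : ℕ) : N (n+1) k =
    ∑ i ∈ Finset.range (n+1), ∑ b ∈ trees i, ∑ t ∈ trees (n-i),
      (if (snoc b t).youngLeaves = k then 1 else 0) := by
  rw [N, trees, Finset.filter_biUnion, Finset.card_biUnion]
  · rw [← Finset.sum_attach (Finset.range (n+1)) (fun i => ∑ b ∈ trees i, ∑ t ∈ trees (n-i),
      (if (snoc b t).youngLeaves = k then 1 else 0))]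
    apply Finset.sum_congr rfl
    intro i _
    rw [Finset.filter_image, Finset.card_image_of_injOn
      (fun p _ q _ h => Prod.ext_iff.2 (snoc_injective p.1 p.2 q.1 q.2 h))]
    rw [Finset.card_filter, Finset.sum_product]
  · -- disjointness
    rintro ⟨i, hi⟩ _ ⟨j, hj⟩ _ hij
    apply Finset.disjoint_filter_filter
    rw [Finset.disjoint_left]
    rintro T hT hT'
    simp only [Finset.mem_image, Finset.mem_product, Prod.exists] at hT hT'
    obtain ⟨b, t, ⟨hb, -⟩, rfl⟩ := hT
    obtain ⟨b', t', ⟨hb', -⟩, he⟩ := hT'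
    obtain ⟨rfl, rfl⟩ := snoc_injective _ _ _ _ he.symm
    rw [mem_trees] at hb hb'
    exact hij (by simp only [Subtype.mk.injEq]; omega)

theorem sum_pair_count (i m k : ℕ) (hi : 1 ≤ i) :
    (∑ b ∈ trees i, ∑ t ∈ trees m, if b.youngLeaves + t.youngLeaves = k then 1 else 0)
      = ∑ j ∈ range (k+1), N i j * N m (k-j) := by
  have inner : ∀ b ∈ trees i, (∑ t ∈ trees m, if b.youngLeaves + t.youngLeaves = k then 1 else 0)
      = if b.youngLeaves ≤ k then N m (k - b.youngLeaves) else 0 := by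
    intro b _
    by_cases h : b.youngLeaves ≤ k
    · rw [if_pos h, N, Finset.card_filter]
      apply Finset.sum_congr rfl
      intro t _
      congr 1
      simp only [eq_iff_iff]
      omega
    · rw [if_neg h]
      apply Finset.sum_eq_zero
      intro t _
      rw [if_neg (by omega)]
  rw [Finset.sum_congr rfl inner, Finset.sum_ite, Finset.sum_const_zero, Nat.add_zero]
  rw [← Finset.sum_fiberwise_of_maps_to (g := youngLeaves) (t := range (k+1))
    (by intro b hb; simp only [Finset.mem_filter] at hb; simp only [mem_range]; omega)]
  apply Finset.sum_congr rfl
  intro j hj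
  simp only [mem_range] at hj
  have e1 : ∀ b ∈ ((trees i).filter fun b => b.youngLeaves ≤ k).filter
      (fun b => b.youngLeaves = j), N m (k - b.youngLeaves) = N m (k - j) := by
    intro b hb
    simp only [Finset.mem_filter] at hb
    rw [hb.2]
  rw [Finset.sum_congr rfl e1, Finset.sum_const, smul_eq_mul]
  congr 1
  rw [N, Finset.filter_filter]
  congr 1
  apply Finset.filter_congr
  intro b _
  constructor
  · rintro ⟨-, h⟩; exact h
  · intro h; exact ⟨by omega, h⟩

theorem edges_nil : edges (node []) = 0 := by rw [edges_node]; rfl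

theorem isLeafInd_eq_zero {t : PlaneTree} (h : t.edges ≠ 0) : t.isLeafInd = 0 := by
  obtain ⟨ts⟩ := t
  cases ts with
  | nil => exact absurd edges_nil h
  | cons a l => rfl

theorem mem_trees_ne_nil {T : PlaneTree} {n : ℕ} (hT : T ∈ trees n) (hn : n ≠ 0) :
    T ≠ node [] := by
  rw [mem_trees] at hT
  intro he
  rw [he, edges_nil] at hT
  exact hn hT.symm

theorem N_one (k : ℕ) : N 1 k = if k = 0 then 1 else 0 := by
  rw [show (1:ℕ) = 0 + 1 from rfl, N_master, Finset.sum_range_one, trees_zero,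
    Finset.sum_singleton, Finset.sum_singleton, young_snoc, if_pos rfl, young_nil]
  simp [eq_comm]

theorem N_rec (m k : ℕ) :
    N (m+2) k = N (m+1) k + (if k = 0 then 0 else N (m+1) (k-1))
      + ∑ i ∈ range m, ∑ j ∈ range (k+1), N (i+1) j * N (m-i) (k-j) := by
  rw [show m+2 = (m+1)+1 from rfl, N_master, Finset.sum_range_succ', Finset.sum_range_succ]
  have g0 : (∑ b ∈ trees 0, ∑ t ∈ trees (m+1-0),
      if (snoc b t).youngLeaves = k then 1 else 0) = N (m+1) k := by
    rw [trees_zero, Finset.sum_singleton]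
    have : ∀ t ∈ trees (m+1-0), (if (snoc (node []) t).youngLeaves = k then 1 else 0)
        = if t.youngLeaves = k then 1 else 0 := by
      intro t _
      rw [young_snoc, if_pos rfl, young_nil]
      simp
    rw [Finset.sum_congr rfl this, ← Finset.card_filter, ← N, Nat.sub_zero]
  have gl : (∑ b ∈ trees (m+1), ∑ t ∈ trees (m+1-(m+1)),
      if (snoc b t).youngLeaves = k then 1 else 0)
      = if k = 0 then 0 else N (m+1) (k-1) := by
    rw [Nat.sub_self, trees_zero]
    have : ∀ b ∈ trees (m+1), (∑ t ∈ ({node []} : Finset PlaneTree),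
        if (snoc b t).youngLeaves = k then 1 else 0)
        = if b.youngLeaves + 1 = k then 1 else 0 := by
      intro b hb
      rw [Finset.sum_singleton, young_snoc, if_neg (mem_trees_ne_nil hb (by omega)),
        young_nil, show isLeafInd (node []) = 1 from rfl]
    rw [Finset.sum_congr rfl this]
    by_cases hk : k = 0
    · subst hk
      rw [if_pos rfl]
      exact Finset.sum_eq_zero fun b _ => by rw [if_neg (by omega)]
    · rw [if_neg hk, N, Finset.card_filter]
      apply Finset.sum_congr rfl
      intro b _
      congr 1
      simp only [eq_iff_iff]
      omega
  have gmid : ∀ i ∈ range m, (∑ b ∈ trees (i+1), ∑ t ∈ trees (m+1-(i+1)),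
      if (snoc b t).youngLeaves = k then 1 else 0)
      = ∑ j ∈ range (k+1), N (i+1) j * N (m-i) (k-j) := by
    intro i hi
    simp only [mem_range] at hi
    rw [show m+1-(i+1) = m-i by omega]
    rw [← sum_pair_count (i+1) (m-i) k (by omega)]
    apply Finset.sum_congr rfl
    intro b hb
    apply Finset.sum_congr rfl
    intro t ht
    rw [young_snoc, if_neg (mem_trees_ne_nil hb (by omega)),
      isLeafInd_eq_zero (show t.edges ≠ 0 by rw [mem_trees] at ht; omega), Nat.add_zero]
  rw [g0, gl, Finset.sum_congr rfl gmid]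
  omega


theorem N_eq : ∀ n : ℕ, 1 ≤ n → ∀ k : ℕ, N n k = bm (n-1) k := by
  intro n
  induction n using Nat.strong_induction_on with
  | _ n ih =>
    intro hn k
    match n, hn with
    | 1, _ =>
      rw [N_one]
      by_cases hk : k = 0
      · subst hk
        rw [if_pos rfl, bm_zero, motzkin_zero]
      · rw [if_neg hk, Nat.sub_self]
        exact (bm_eq_zero (by omega)).symm
    | (m+2), _ =>
      rw [N_rec, ih (m+1) (by omega) (by omega) k]
      have e2 : (if k = 0 then 0 else N (m+1) (k-1)) = (if k = 0 then 0 else bm m (k-1)) := by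
        by_cases hk : k = 0
        · rw [if_pos hk, if_pos hk]
        · rw [if_neg hk, if_neg hk, ih (m+1) (by omega) (by omega) (k-1), Nat.add_sub_cancel]
      have e3 : ∀ i ∈ Finset.range m, ∑ j ∈ Finset.range (k+1), N (i+1) j * N (m-i) (k-j)
          = ∑ j ∈ Finset.range (k+1), bm i j * bm (m-1-i) (k-j) := by
        intro i hi
        simp only [Finset.mem_range] at hi
        apply Finset.sum_congr rfl
        intro j _
        rw [ih (i+1) (by omega) (by omega) j, ih (m-i) (by omega) (by omega) (k-j),
          Nat.add_sub_cancel, show m-i-1 = m-1-i by omega]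
      rw [e2, Finset.sum_congr rfl e3, show m+2-1 = m+1 by omega,
        show m = m+1-1 from rfl]
      exact (gId (m+1-1) k).symm

end PlaneTree


/-- The number of plane trees with `n` edges and `k` young leaves is `C(n-1,k)·M_{n-k-1}`. -/
theorem card_planeTrees_young (n k : ℕ) (hn : 1 ≤ n) :
    Nat.card {T : PlaneTree // T.edges = n ∧ T.youngLeaves = k} =
      (n - 1).choose k * motzkin (n - k - 1) := by
  have h1 : Nat.card {T : PlaneTree // T.edges = n ∧ T.youngLeaves = k}
      = PlaneTree.N n k := by
    rw [PlaneTree.N, ← Set.ncard_coe_finset, ← Nat.card_coe_set_eq]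
    apply Nat.card_congr
    apply Equiv.subtypeEquivRight
    intro T
    simp only [Finset.coe_filter, Set.mem_setOf_eq, PlaneTree.mem_trees]
  rw [h1, PlaneTree.N_eq n hn k, bm, show n-1-k = n-k-1 by omega]
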